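/- Let β be a real skew-symmetric ν×ν matrix and let t ∈ ℂ be such that the matrix sin(βt) is invertible. Define q(s) := exp(−iβt(1−s))·sin(βts)·(sin(βt))⁻¹ and r(s) := exp(iβts)·sin(βt(1−s))·(sin(βt))⁻¹ for s ∈ [0,1]. Then q and r both satisfy the ODE q̈(s) = 2iβt·q̇(s) on [0,1], with boundary values q(0) = 0, q(1) = 𝟙 and r(0) = 𝟙, r(1) = 0. (These are the solutions q̃♭_t and q̃♯_t in the magnetic case A = 𝟙, C = 0, B = −(i/2)β, for which E = 2iβ and F = 0.) -/

import Mathlib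

open Matrix Set

attribute [local instance] Matrix.linftyOpNormedAddCommGroup Matrix.linftyOpNormedRing
  Matrix.linftyOpNormedAlgebra

noncomputable section

abbrev Mat (ν : ℕ) := Matrix (Fin ν) (Fin ν) ℂ

/-- The matrix sine, `sin M := (exp(iM) − exp(−iM))/(2i)`. -/
def msin {ν : ℕ} (M : Mat ν) : Mat ν :=
  ((2 : ℂ) * Complex.I)⁻¹ •
    (NormedSpace.exp (Complex.I • M) - NormedSpace.exp (-(Complex.I • M)))

lemma exp_mul_msin {ν : ℕ} (c d : ℂ) (M : Mat ν) :
    NormedSpace.exp (c • M) * msin (d • M) =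
      ((2 : ℂ) * Complex.I)⁻¹ •
        (NormedSpace.exp ((c + Complex.I * d) • M) -
          NormedSpace.exp ((c - Complex.I * d) • M)) := by
  unfold msin
  rw [mul_smul_comm, mul_sub, smul_smul, ← neg_smul]
  erw [← NormedSpace.exp_add_of_commute (((Commute.refl M).smul_left c).smul_right _),
    ← NormedSpace.exp_add_of_commute (((Commute.refl M).smul_left c).smul_right _),
    ← add_smul, ← add_smul]
  ring_nf
  rfl

lemma hasDerivAt_exp_aff {ν : ℕ} (a b : ℂ) (M : Mat ν) (x : ℝ) :
    HasDerivAt (fun s : ℝ => NormedSpace.exp ((a * (s : ℂ) + b) • M))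
      (a • (M * NormedSpace.exp ((a * (x : ℂ) + b) • M))) x := by
  have h1 : HasDerivAt (fun z : ℂ => NormedSpace.exp (z • M))
      (M * NormedSpace.exp ((a * (x : ℂ) + b) • M)) (a * (x : ℂ) + b) :=
    hasDerivAt_exp_smul_const' M _
  have h2 : HasDerivAt (fun s : ℝ => a * (s : ℂ) + b) a x := by
    simpa using (Complex.ofRealCLM.hasDerivAt.const_mul a).add_const b
  exact h1.scomp x h2

/-- The magnetic case: explicit solutions of the boundary value problem
`q̈ = 2iβt q̇` on `[0,1]`. -/
theorem statement17 (ν : ℕ) (hν : 1 ≤ ν)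
    (β : Matrix (Fin ν) (Fin ν) ℝ) (hskew : βᵀ = -β)
    (t : ℂ) (βC : Mat ν) (hβC : βC = β.map (Complex.ofReal : ℝ → ℂ))
    (hinv : IsUnit (msin (t • βC)))
    (q r : ℝ → Mat ν)
    (hq : q = fun s : ℝ =>
      NormedSpace.exp ((-(Complex.I * t * (1 - (s : ℂ)))) • βC) *
        msin ((t * (s : ℂ)) • βC) * (msin (t • βC))⁻¹)
    (hr : r = fun s : ℝ =>
      NormedSpace.exp ((Complex.I * t * (s : ℂ)) • βC) *
        msin ((t * (1 - (s : ℂ))) • βC) * (msin (t • βC))⁻¹) :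
    (∀ s ∈ Icc (0 : ℝ) 1,
        deriv (deriv q) s = ((2 : ℂ) * Complex.I * t) • (βC * deriv q s)) ∧
      q 0 = 0 ∧ q 1 = 1 ∧
      (∀ s ∈ Icc (0 : ℝ) 1,
        deriv (deriv r) s = ((2 : ℂ) * Complex.I * t) • (βC * deriv r s)) ∧
      r 0 = 1 ∧ r 1 = 0 := by
  set S : Mat ν := (msin (t • βC))⁻¹ with hS
  set G : ℝ → Mat ν :=
    fun s => NormedSpace.exp ((2 * Complex.I * t * (s : ℂ) + -(Complex.I * t)) • βC)
    with hG
  have hSS : msin (t • βC) * S = 1 :=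
    Matrix.mul_nonsing_inv _ ((Matrix.isUnit_iff_isUnit_det _).mp hinv)
  -- rewritten forms
  have hq2 : q = fun s : ℝ =>
      ((2 : ℂ) * Complex.I)⁻¹ • (G s * S) -
        ((2 : ℂ) * Complex.I)⁻¹ • (NormedSpace.exp ((-(Complex.I * t)) • βC) * S) := by
    rw [hq]; funext s
    rw [exp_mul_msin, smul_mul_assoc, sub_mul, smul_sub, hG]
    congr 3 <;> ring
  have hr2 : r = fun s : ℝ =>
      ((2 : ℂ) * Complex.I)⁻¹ • (NormedSpace.exp ((Complex.I * t) • βC) * S) -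
        ((2 : ℂ) * Complex.I)⁻¹ • (G s * S) := by
    rw [hr]; funext s
    rw [exp_mul_msin, smul_mul_assoc, sub_mul, smul_sub, hG]
    congr 3 <;> ring
  have hGd : ∀ x : ℝ, HasDerivAt G ((2 * Complex.I * t) • (βC * G x)) x := fun x =>
    hasDerivAt_exp_aff _ _ _ _
  have hcoef : ((2 : ℂ) * Complex.I)⁻¹ * (2 * Complex.I * t) = t := by
    field_simp
  have hqd : ∀ x : ℝ, HasDerivAt q (t • (βC * (G x * S))) x := by
    intro x
    rw [hq2]
    have := (((hGd x).mul_const S).const_smul (((2 : ℂ) * Complex.I)⁻¹)).sub_const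
      (((2 : ℂ) * Complex.I)⁻¹ • (NormedSpace.exp ((-(Complex.I * t)) • βC) * S))
    convert this using 1
    · rfl
    · rfl
    · rfl
    · rfl
    rw [smul_mul_assoc, smul_smul, hcoef, mul_assoc]
  have hrd : ∀ x : ℝ, HasDerivAt r ((-t) • (βC * (G x * S))) x := by
    intro x
    rw [hr2]
    have := (((hGd x).mul_const S).const_smul (((2 : ℂ) * Complex.I)⁻¹)).const_sub
      (((2 : ℂ) * Complex.I)⁻¹ • (NormedSpace.exp ((Complex.I * t) • βC) * S))
    convert this using 1
    · rfl
    · rfl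
    · rfl
    · rfl
    rw [smul_mul_assoc, smul_smul, hcoef, mul_assoc, neg_smul]
  have hdq : deriv q = fun x => t • (βC * (G x * S)) := funext fun x => (hqd x).deriv
  have hdr : deriv r = fun x => (-t) • (βC * (G x * S)) := funext fun x => (hrd x).deriv
  have hGd2 : ∀ (c : ℂ) (x : ℝ),
      HasDerivAt (fun x => c • (βC * (G x * S)))
        (c • (βC * (((2 * Complex.I * t) • (βC * G x)) * S))) x := fun c x =>
    ((((hGd x).mul_const S).const_mul βC).const_smul c)
  have hmsin0 : msin (0 : Mat ν) = 0 := by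
    simp [msin]
  refine ⟨?_, ?_, ?_, ?_, ?_, ?_⟩
  · intro s _
    rw [hdq]; erw [(hGd2 t s).deriv]
    simp only [smul_mul_assoc, Matrix.mul_smul, smul_smul, mul_assoc]
    ring_nf
  · rw [hq]
    have : (t * ((0 : ℝ) : ℂ)) • βC = (0 : Mat ν) := by norm_num
    simp [this, hmsin0]
  · rw [hq]
    have h1 : (-(Complex.I * t * (1 - ((1 : ℝ) : ℂ)))) • βC = (0 : ℂ) • βC := by norm_num
    have h2 : (t * ((1 : ℝ) : ℂ)) • βC = t • βC := by norm_num
    simp only [h1, h2, zero_smul, NormedSpace.exp_zero, one_mul]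
    exact hSS
  · intro s _
    rw [hdr]; erw [(hGd2 (-t) s).deriv]
    simp only [smul_mul_assoc, Matrix.mul_smul, smul_smul, mul_assoc]
    ring_nf
  · rw [hr]
    have h1 : (Complex.I * t * ((0 : ℝ) : ℂ)) • βC = (0 : ℂ) • βC := by norm_num
    have h2 : (t * (1 - ((0 : ℝ) : ℂ))) • βC = t • βC := by norm_num
    simp only [h1, h2, zero_smul, NormedSpace.exp_zero, one_mul]
    exact hSS
  · rw [hr]
    have : (t * (1 - ((1 : ℝ) : ℂ))) • βC = (0 : Mat ν) := by norm_num
    simp [this, hmsin0]
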